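/- arXiv:1605.00047 — 5 statements merged into one kernel-verified Lean document; each statement's English description precedes it below -/
import Mathlib

section
/- Let a, a1, c, n be positive integers with (4a+3)/7 + (4a1+3)/7 + c − 1 ≥ (4n−1)/7, and suppose that (4a+3, 4a1+3) is not congruent to (0,4) or (4,0) modulo 7. Then max over A ∈ {0,1} of [ ⌈(4(a−A)+3)/7⌉ + ⌈(4(a1−A)+3)/7⌉ + c − (1−A) ] ≥ ⌈(4n+3)/7⌉. -/
lemma ceil7 (m : ℤ) : ⌈((m : ℚ)) / 7⌉ = -((-m) / 7) := by
  have h : ⌊(((-m : ℤ)) : ℚ) / ((7:ℕ) : ℚ)⌋ = (-m) / 7 :=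
    Rat.floor_intCast_div_natCast (-m) 7
  rw [← h]
  push_cast
  rw [neg_div, Int.floor_neg, neg_neg]

/-- Lemma 2.2(2): for positive integers `a, a1, c, n` with
`(4a+3)/7 + (4a1+3)/7 + c - 1 ≥ (4n-1)/7` and
`(4a+3, 4a1+3) ≢ (0,4), (4,0) (mod 7)`, the maximum over `A ∈ {0,1}` of
`⌈(4(a-A)+3)/7⌉ + ⌈(4(a1-A)+3)/7⌉ + c - (1-A)` is at least `⌈(4n+3)/7⌉`. -/
theorem ineq_lemma_two_part2 (a a1 c n : ℕ)
    (ha : 0 < a) (ha1 : 0 < a1) (hc : 0 < c) (hn : 0 < n)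
    (hineq : (4 * (a : ℚ) + 3) / 7 + (4 * (a1 : ℚ) + 3) / 7 + (c : ℚ) - 1
      ≥ (4 * (n : ℚ) - 1) / 7)
    (hmod1 : ¬ ((4 * a + 3) % 7 = 0 ∧ (4 * a1 + 3) % 7 = 4))
    (hmod2 : ¬ ((4 * a + 3) % 7 = 4 ∧ (4 * a1 + 3) % 7 = 0)) :
    ⌈(4 * (n : ℚ) + 3) / 7⌉ ≤
      max (⌈(4 * (a : ℚ) + 3) / 7⌉ + ⌈(4 * (a1 : ℚ) + 3) / 7⌉ + (c : ℤ) - 1)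
        (⌈(4 * ((a : ℚ) - 1) + 3) / 7⌉ + ⌈(4 * ((a1 : ℚ) - 1) + 3) / 7⌉ + (c : ℤ)) := by
  have key : 4 * n ≤ 4 * a + 4 * a1 + 7 * c := by
    have h : (4 * (n : ℚ)) ≤ 4 * a + 4 * a1 + 7 * c := by linarith
    exact_mod_cast h
  have e1 : (4 * (a : ℚ) + 3) = ((4 * (a:ℤ) + 3 : ℤ) : ℚ) := by push_cast; ring
  have e2 : (4 * (a1 : ℚ) + 3) = ((4 * (a1:ℤ) + 3 : ℤ) : ℚ) := by push_cast; ring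
  have e3 : (4 * (n : ℚ) + 3) = ((4 * (n:ℤ) + 3 : ℤ) : ℚ) := by push_cast; ring
  have e4 : (4 * ((a : ℚ) - 1) + 3) = ((4 * (a:ℤ) - 1 : ℤ) : ℚ) := by push_cast; ring
  have e5 : (4 * ((a1 : ℚ) - 1) + 3) = ((4 * (a1:ℤ) - 1 : ℤ) : ℚ) := by push_cast; ring
  rw [e1, e2, e3, e4, e5, ceil7, ceil7, ceil7, ceil7, ceil7, le_max_iff]
  have hra : (4 * (a:ℤ) + 3) % 7 = 0 ∨ (4 * (a:ℤ) + 3) % 7 = 1 ∨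
      (4 * (a:ℤ) + 3) % 7 = 2 ∨ (4 * (a:ℤ) + 3) % 7 = 3 ∨ (4 * (a:ℤ) + 3) % 7 = 4 ∨
      (4 * (a:ℤ) + 3) % 7 = 5 ∨ (4 * (a:ℤ) + 3) % 7 = 6 := by omega
  have hrb : (4 * (a1:ℤ) + 3) % 7 = 0 ∨ (4 * (a1:ℤ) + 3) % 7 = 1 ∨
      (4 * (a1:ℤ) + 3) % 7 = 2 ∨ (4 * (a1:ℤ) + 3) % 7 = 3 ∨ (4 * (a1:ℤ) + 3) % 7 = 4 ∨
      (4 * (a1:ℤ) + 3) % 7 = 5 ∨ (4 * (a1:ℤ) + 3) % 7 = 6 := by omega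
  rcases hra with h | h | h | h | h | h | h <;>
    rcases hrb with h' | h' | h' | h' | h' | h' | h' <;>
    omega
end

section
/- Let k ≥ 1, let a1, ..., ak, c, n be positive integers with (Σ_{i=1}^k (4ai+3)/7) + c ≥ (4n+2)/7. Then either Σ_{i=1}^k ⌈(4ai+3)/7⌉ + c ≥ ⌈(4n+3)/7⌉, or 4ai+3 ≡ 0 (mod 7) for every i ∈ {1,...,k}. -/
lemma ceil_div7_gain (m : ℕ) (h : m % 7 ≠ 0) :
    ((m : ℚ) + 1) / 7 ≤ (⌈(m : ℚ) / 7⌉ : ℚ) := by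
  have h1 : (m : ℚ) / 7 ≤ (⌈(m : ℚ) / 7⌉ : ℚ) := Int.le_ceil _
  have h2 : (m : ℤ) ≤ 7 * ⌈(m : ℚ) / 7⌉ := by
    have : (m : ℚ) ≤ 7 * (⌈(m : ℚ) / 7⌉ : ℚ) := by linarith
    exact_mod_cast this
  have h3 : (m : ℤ) ≠ 7 * ⌈(m : ℚ) / 7⌉ := by
    intro he
    apply h
    omega
  have h4 : (m : ℤ) + 1 ≤ 7 * ⌈(m : ℚ) / 7⌉ := by omega
  have h5 : ((m : ℤ) : ℚ) + 1 ≤ 7 * (⌈(m : ℚ) / 7⌉ : ℚ) := by exact_mod_cast h4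
  push_cast at h5
  linarith

/-- Lemma 2.2(6): for `k ≥ 1` and positive integers `a1, …, ak, c, n` with
`Σ (4ai+3)/7 + c ≥ (4n+2)/7`, either `Σ ⌈(4ai+3)/7⌉ + c ≥ ⌈(4n+3)/7⌉` or
`4ai+3 ≡ 0 (mod 7)` for every `i`. -/
theorem ineq_lemma_two_part6 (k : ℕ) (hk : 1 ≤ k) (a : Fin k → ℕ) (c n : ℕ)
    (ha : ∀ i, 0 < a i) (hc : 0 < c) (hn : 0 < n)
    (hineq : (∑ i, (4 * (a i : ℚ) + 3) / 7) + (c : ℚ) ≥ (4 * (n : ℚ) + 2) / 7) :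
    ((∑ i, ⌈(4 * (a i : ℚ) + 3) / 7⌉) + (c : ℤ) ≥ ⌈(4 * (n : ℚ) + 3) / 7⌉) ∨
      (∀ i, (4 * a i + 3) % 7 = 0) := by
  by_cases hall : ∀ i, (4 * a i + 3) % 7 = 0
  · exact Or.inr hall
  left
  push_neg at hall
  obtain ⟨i0, hi0⟩ := hall
  rw [ge_iff_le, Int.ceil_le]
  push_cast
  have key : ∀ i ∈ Finset.univ,
      (4 * (a i : ℚ) + 3) / 7 + (if i = i0 then (1:ℚ)/7 else 0)
        ≤ (⌈(4 * (a i : ℚ) + 3) / 7⌉ : ℚ) := by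
    intro i _
    split_ifs with h
    · subst h
      have := ceil_div7_gain (4 * a i + 3) hi0
      push_cast at this
      linarith
    · have := Int.le_ceil ((4 * (a i : ℚ) + 3) / 7)
      linarith
  have hsum := Finset.sum_le_sum key
  rw [Finset.sum_add_distrib, Finset.sum_ite_eq' Finset.univ i0 (fun _ => (1:ℚ)/7)] at hsum
  simp at hsum
  linarith
end

section
/- Let k ≥ 1, let a1, ..., ak, c, n be positive integers with (Σ_{i=1}^k (4ai+3)/7) + c ≥ (4n+1)/7. Then either Σ_{i=1}^k ⌈(4ai+3)/7⌉ + c ≥ ⌈(4n+3)/7⌉, or there exists an index j such that 4aj+3 ≡ 0 or 6 (mod 7) and 4ai+3 ≡ 0 (mod 7) for all i ≠ j. -/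
lemma ceil_gain_aux (m : ℕ) (g : ℕ) (h1 : 1 ≤ g) (hg : m % 7 + g ≤ 7) (h0 : m % 7 ≠ 0) :
    (m : ℚ) / 7 + (g : ℚ) / 7 ≤ (⌈(m : ℚ) / 7⌉ : ℚ) := by
  set q := m / 7 with hq
  have hdm : 7 * q + m % 7 = m := Nat.div_add_mod m 7
  have hlt : (q : ℚ) < (m : ℚ) / 7 := by
    rw [lt_div_iff₀ (by norm_num : (0:ℚ) < 7)]
    have : 7 * q + 1 ≤ m := by omega
    have := (Nat.cast_le (α := ℚ)).mpr this
    push_cast at this ⊢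
    linarith
  have hceil : (q : ℤ) + 1 ≤ ⌈(m : ℚ) / 7⌉ := by
    have := Int.lt_ceil.mpr (by exact_mod_cast hlt : ((q : ℤ) : ℚ) < (m : ℚ) / 7)
    omega
  have hceil' : ((q : ℚ) + 1) ≤ (⌈(m : ℚ) / 7⌉ : ℚ) := by exact_mod_cast hceil
  have hup : m + g ≤ 7 * q + 7 := by omega
  have hup' := (Nat.cast_le (α := ℚ)).mpr hup
  push_cast at hup'
  rw [← add_div, div_le_iff₀ (by norm_num : (0:ℚ) < 7)]
  linarith

lemma ceil_base (x : ℚ) : x ≤ (⌈x⌉ : ℚ) := Int.le_ceil _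

/-- Lemma 2.2(7): for `k ≥ 1` and positive integers `a1, …, ak, c, n` with
`Σ (4ai+3)/7 + c ≥ (4n+1)/7`, either `Σ ⌈(4ai+3)/7⌉ + c ≥ ⌈(4n+3)/7⌉` or there
is an index `j` with `4aj+3 ≡ 0` or `6 (mod 7)` and `4ai+3 ≡ 0 (mod 7)` for all
`i ≠ j`. -/
theorem ineq_lemma_two_part7 (k : ℕ) (hk : 1 ≤ k) (a : Fin k → ℕ) (c n : ℕ)
    (ha : ∀ i, 0 < a i) (hc : 0 < c) (hn : 0 < n)
    (hineq : (∑ i, (4 * (a i : ℚ) + 3) / 7) + (c : ℚ) ≥ (4 * (n : ℚ) + 1) / 7) :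
    ((∑ i, ⌈(4 * (a i : ℚ) + 3) / 7⌉) + (c : ℤ) ≥ ⌈(4 * (n : ℚ) + 3) / 7⌉) ∨
      (∃ j, ((4 * a j + 3) % 7 = 0 ∨ (4 * a j + 3) % 7 = 6) ∧
        ∀ i, i ≠ j → (4 * a i + 3) % 7 = 0) := by
  classical
  -- F i is the gain of the ceiling over the base value
  set F : Fin k → ℚ := fun i => (⌈(4 * (a i : ℚ) + 3) / 7⌉ : ℚ) - (4 * (a i : ℚ) + 3) / 7
    with hF
  have hFnn : ∀ i, 0 ≤ F i := fun i => by
    have := ceil_base ((4 * (a i : ℚ) + 3) / 7); simp [hF]; linarith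
  have hcast : ∀ i, (4 * (a i : ℚ) + 3) = ((4 * a i + 3 : ℕ) : ℚ) := fun i => by push_cast; ring
  have hgain : ∀ i (g : ℕ), 1 ≤ g → (4 * a i + 3) % 7 + g ≤ 7 → (4 * a i + 3) % 7 ≠ 0 →
      (g : ℚ) / 7 ≤ F i := by
    intro i g h1 hg h0
    have := ceil_gain_aux (4 * a i + 3) g h1 hg h0
    rw [← hcast i] at this
    simp only [hF]
    linarith
  -- main sufficiency: if total gain ≥ 2/7, left disjunct holds
  have main : (2 : ℚ) / 7 ≤ ∑ i, F i →
      ((∑ i, ⌈(4 * (a i : ℚ) + 3) / 7⌉) + (c : ℤ) ≥ ⌈(4 * (n : ℚ) + 3) / 7⌉) := by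
    intro hG
    have hsum : (4 * (n : ℚ) + 3) / 7 ≤ (((∑ i, ⌈(4 * (a i : ℚ) + 3) / 7⌉) + (c : ℤ) : ℤ) : ℚ) := by
      have hexp : ((∑ i, ⌈(4 * (a i : ℚ) + 3) / 7⌉ : ℤ) : ℚ)
          = (∑ i, (4 * (a i : ℚ) + 3) / 7) + ∑ i, F i := by
        push_cast
        rw [← Finset.sum_add_distrib]
        congr 1; ext i; simp [hF]
      push_cast
      push_cast at hexp
      rw [hexp]
      linarith
    exact Int.ceil_le.mpr hsum
  by_cases h2ex : ∃ i j, i ≠ j ∧ (4 * a i + 3) % 7 ≠ 0 ∧ (4 * a j + 3) % 7 ≠ 0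
  · left
    obtain ⟨i, j, hij, hi, hj⟩ := h2ex
    apply main
    have hri : (1 : ℚ) / 7 ≤ F i := hgain i 1 le_rfl (by omega) hi
    have hrj : (1 : ℚ) / 7 ≤ F j := hgain j 1 le_rfl (by omega) hj
    have hsplit : F i + ∑ x ∈ Finset.univ.erase i, F x = ∑ x, F x :=
      Finset.add_sum_erase _ _ (Finset.mem_univ i)
    have hjmem : j ∈ Finset.univ.erase i := Finset.mem_erase.mpr ⟨fun h => hij h.symm, Finset.mem_univ j⟩
    have hrest : F j ≤ ∑ x ∈ Finset.univ.erase i, F x :=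
      Finset.single_le_sum (fun x _ => hFnn x) hjmem
    calc (2:ℚ)/7 = 1/7 + 1/7 := by norm_num
    _ ≤ F i + F j := by linarith
    _ ≤ F i + ∑ x ∈ Finset.univ.erase i, F x := by linarith
    _ = ∑ x, F x := hsplit
  · by_cases h5ex : ∃ j, (4 * a j + 3) % 7 ≠ 0 ∧ (4 * a j + 3) % 7 ≠ 6
    · left
      obtain ⟨j, hj0, hj6⟩ := h5ex
      apply main
      have hrj : (2 : ℚ) / 7 ≤ F j := hgain j 2 (by omega) (by omega) hj0
      exact le_trans hrj (Finset.single_le_sum (fun x _ => hFnn x) (Finset.mem_univ j))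
    · right
      push_neg at h2ex h5ex
      by_cases hjex : ∃ j, (4 * a j + 3) % 7 ≠ 0
      · obtain ⟨j, hj⟩ := hjex
        exact ⟨j, Or.inr (h5ex j hj), fun i hi => by
          by_contra hi0
          exact hj (h2ex i j hi hi0)⟩
      · push_neg at hjex
        exact ⟨⟨0, hk⟩, Or.inl (hjex _), fun i _ => hjex i⟩
end

section
/- Let a, a1, c, n be positive integers with (4a+3)/7 + (4a1+3)/7 + c − 1 ≥ (4n)/7. Then max over A ∈ {0,1} of [ ⌈(4(a−A)+3)/7⌉ + ⌈(4(a1−A)+3)/7⌉ + c − (1−A) ] ≥ ⌈(4n+3)/7⌉. -/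
lemma ceil_div7 (m : ℤ) : ⌈(m : ℚ) / 7⌉ = (m + 6) / 7 := by
  rw [show ((m:ℚ))/7 = -(((-m : ℤ):ℚ)/((7:ℕ):ℚ)) by push_cast; ring, Int.ceil_neg,
    Rat.floor_intCast_div_natCast]
  omega

/-- Lemma 2.2(1) in the case `k = 1`, `L = ∅`: for positive integers `a, a1, c, n`
with `(4a+3)/7 + (4a1+3)/7 + c - 1 ≥ 4n/7`, the maximum over `A ∈ {0,1}` of
`⌈(4(a-A)+3)/7⌉ + ⌈(4(a1-A)+3)/7⌉ + c - (1-A)` is at least `⌈(4n+3)/7⌉`. -/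
theorem ineq_lemma_two_part1 (a a1 c n : ℕ)
    (ha : 0 < a) (ha1 : 0 < a1) (hc : 0 < c) (hn : 0 < n)
    (hineq : (4 * (a : ℚ) + 3) / 7 + (4 * (a1 : ℚ) + 3) / 7 + (c : ℚ) - 1
      ≥ 4 * (n : ℚ) / 7) :
    ⌈(4 * (n : ℚ) + 3) / 7⌉ ≤
      max (⌈(4 * (a : ℚ) + 3) / 7⌉ + ⌈(4 * (a1 : ℚ) + 3) / 7⌉ + (c : ℤ) - 1)
        (⌈(4 * ((a : ℚ) - 1) + 3) / 7⌉ + ⌈(4 * ((a1 : ℚ) - 1) + 3) / 7⌉ + (c : ℤ)) := by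
  have h1 : (4 * (a : ℚ) + 3) = ((4 * (a:ℤ) + 3 : ℤ) : ℚ) := by push_cast; ring
  have h2 : (4 * (a1 : ℚ) + 3) = ((4 * (a1:ℤ) + 3 : ℤ) : ℚ) := by push_cast; ring
  have h3 : (4 * (n : ℚ) + 3) = ((4 * (n:ℤ) + 3 : ℤ) : ℚ) := by push_cast; ring
  have h4 : (4 * ((a : ℚ) - 1) + 3) = ((4 * (a:ℤ) - 1 : ℤ) : ℚ) := by push_cast; ring
  have h5 : (4 * ((a1 : ℚ) - 1) + 3) = ((4 * (a1:ℤ) - 1 : ℤ) : ℚ) := by push_cast; ring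
  rw [h1, h2, h3, h4, h5, ceil_div7, ceil_div7, ceil_div7, ceil_div7, ceil_div7]
  have key : 4 * (n:ℤ) ≤ 4 * a + 3 + (4 * a1 + 3) + 7 * c - 7 := by
    have := mul_le_mul_of_nonneg_left hineq (by norm_num : (0:ℚ) ≤ 7)
    have : (4 * (n:ℚ)) ≤ 4 * a + 3 + (4 * a1 + 3) + 7 * c - 7 := by linarith
    exact_mod_cast this
  rw [le_max_iff]
  have h1 : (a:ℤ) % 7 = 0 ∨ (a:ℤ) % 7 = 1 ∨ (a:ℤ) % 7 = 2 ∨ (a:ℤ) % 7 = 3 ∨ (a:ℤ) % 7 = 4 ∨ (a:ℤ) % 7 = 5 ∨ (a:ℤ) % 7 = 6 := by omega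
  have h2 : (a1:ℤ) % 7 = 0 ∨ (a1:ℤ) % 7 = 1 ∨ (a1:ℤ) % 7 = 2 ∨ (a1:ℤ) % 7 = 3 ∨ (a1:ℤ) % 7 = 4 ∨ (a1:ℤ) % 7 = 5 ∨ (a1:ℤ) % 7 = 6 := by omega
  rcases h1 with h1|h1|h1|h1|h1|h1|h1 <;> rcases h2 with h2|h2|h2|h2|h2|h2|h2 <;> omega
end

section
/- Let G be a finite simple graph and v a vertex of G with degree at most 3. Then there exists an induced forest of G of maximum size that contains v. -/
open SimpleGraph Walk

namespace ForestAux

variable {V : Type*} {G : SimpleGraph V}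

/-- Push a walk in an induced subgraph down to an induced subgraph on a smaller
vertex set, given that the support stays in the smaller set. -/
def lowerWalk {A B : Set V} :
    ∀ {x y : ↥B} (p : (G.induce B).Walk x y) (hs : ∀ z ∈ p.support, (z : V) ∈ A),
      (G.induce A).Walk ⟨x, hs x p.start_mem_support⟩ ⟨y, hs y p.end_mem_support⟩
  | _, _, .nil, _ => .nil
  | _, _, .cons h p, hs =>
      .cons (by exact h) (lowerWalk p (fun z hz => hs z (by simp [hz])))

lemma lowerWalk_map {A B : Set V} (hAB : A ⊆ B) {x y : ↥B}
    (p : (G.induce B).Walk x y) (hs : ∀ z ∈ p.support, (z : V) ∈ A) :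
    (lowerWalk p hs).map (G.induceHomOfLE hAB).toHom = p := by
  induction p with
  | nil => rfl
  | cons h p ih =>
      rw [lowerWalk]
      exact congrArg _ (ih _)

lemma acyclic_mono {A B : Set V} (hAB : A ⊆ B)
    (hB : (G.induce B).IsAcyclic) : (G.induce A).IsAcyclic := by
  intro u c hc
  exact hB (c.map (G.induceHomOfLE hAB).toHom)
    ((Walk.map_isCycle_iff_of_injective (G.induceHomOfLE hAB).injective).mpr hc)

lemma reach_up {A B : Set V} (hAB : A ⊆ B) {a b : V} {ha : a ∈ A} {hb : b ∈ A}
    (h : (G.induce A).Reachable ⟨a, ha⟩ ⟨b, hb⟩) :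
    (G.induce B).Reachable ⟨a, hAB ha⟩ ⟨b, hAB hb⟩ :=
  h.elim fun p => ⟨p.map (G.induceHomOfLE hAB).toHom⟩

lemma path_loop_nil {W : Type*} {H : SimpleGraph W} {x : W} {r : H.Walk x x}
    (hr : r.IsPath) : r = Walk.nil := by
  cases r with
  | nil => rfl
  | cons h r' =>
      rw [Walk.cons_isPath_iff] at hr
      exact absurd r'.end_mem_support hr.2

end ForestAux

namespace ForestAux2
open ForestAux

variable {V : Type*} {G : SimpleGraph V}

lemma insert_acyclic (S : Set V) (v : V) (hv : v ∉ S) (hS : (G.induce S).IsAcyclic)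
    (h : ∀ a b (ha : a ∈ S) (hb : b ∈ S), G.Adj v a → G.Adj v b → a ≠ b →
      ¬ (G.induce S).Reachable ⟨a, ha⟩ ⟨b, hb⟩) :
    (G.induce (insert v S)).IsAcyclic := by
  have hSsub : S ⊆ insert v S := Set.subset_insert v S
  classical
  intro w c hc
  by_cases hvc : (⟨v, Set.mem_insert v S⟩ : ↥(insert v S)) ∈ c.support
  · have hc' : (c.rotate _ hvc).IsCycle := hc.rotate hvc
    generalize c.rotate _ hvc = c' at hc'
    cases c' with
    | nil => exact hc'.ne_nil rfl
    | @cons _ x _ hadj p =>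
        rw [Walk.cons_isCycle_iff] at hc'
        obtain ⟨hp, hedge⟩ := hc'
        obtain ⟨y, hadj2, r, hr⟩ := Walk.exists_eq_cons_of_ne hadj.ne p.reverse
        have hp' : p.reverse.IsPath := hp.reverse
        rw [hr, Walk.cons_isPath_iff] at hp'
        obtain ⟨hrpath, hvr⟩ := hp'
        by_cases hxy : x = y
        · subst hxy
          have hrnil : r = Walk.nil := path_loop_nil hrpath
          rw [hrnil] at hr
          have hpe : p.edges = [s(⟨v, Set.mem_insert v S⟩, x)] := by
            have := congrArg Walk.edges hr
            rw [Walk.edges_reverse] at this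
            simpa [List.reverse_eq_iff] using this
          exact hedge (by rw [hpe]; simp)
        · -- x ≠ y, r : Walk y x avoiding v
          have hxv : (x : V) ≠ v := fun hxvv => hadj.ne' (Subtype.ext hxvv)
          have hyv : (y : V) ≠ v := fun hyvv => hadj2.ne (Subtype.ext hyvv).symm
          have hxS : (x : V) ∈ S := by
            rcases x.2 with h1 | h1
            · exact absurd h1 hxv
            · exact h1
          have hyS : (y : V) ∈ S := by
            rcases y.2 with h1 | h1
            · exact absurd h1 hyv
            · exact h1
          have hs : ∀ z ∈ r.support, (z : V) ∈ S := by
            intro z hz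
            rcases z.2 with h1 | h1
            · exact absurd (by rwa [show z = ⟨v, Set.mem_insert v S⟩ from Subtype.ext h1] at hz) hvr
            · exact h1
          have hadjvx : G.Adj v (x : V) := hadj
          have hadjvy : G.Adj v (y : V) := hadj2
          have hne : (y : V) ≠ (x : V) := fun hh => hxy (Subtype.ext hh.symm)
          exact h y x hyS hxS hadjvy hadjvx hne ⟨lowerWalk r hs⟩
  · have hs : ∀ z ∈ c.support, (z : V) ∈ S := by
      intro z hz
      rcases z.2 with h1 | h1
      · exact absurd (by rwa [show z = ⟨v, Set.mem_insert v S⟩ from Subtype.ext h1] at hz) hvc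
      · exact h1
    exact hS (lowerWalk c hs)
      ((Walk.map_isCycle_iff_of_injective (G.induceHomOfLE hSsub).injective).mp
        (by rw [lowerWalk_map hSsub]; exact hc))

lemma exists_pair (S : Set V) (v : V) (hv : v ∉ S) (hS : (G.induce S).IsAcyclic)
    (hna : ¬ (G.induce (insert v S)).IsAcyclic) :
    ∃ (a b : V) (ha : a ∈ S) (hb : b ∈ S), G.Adj v a ∧ G.Adj v b ∧ a ≠ b ∧
      (G.induce S).Reachable ⟨a, ha⟩ ⟨b, hb⟩ := by
  by_contra hcon
  apply hna
  apply insert_acyclic S v hv hS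
  intro a b ha hb h1 h2 h3 h4
  exact hcon ⟨a, b, ha, hb, h1, h2, h3, h4⟩

end ForestAux2

namespace ForestAux3
open ForestAux ForestAux2

variable {W : Type*} {H : SimpleGraph W}

lemma takeUntil_cons [DecidableEq W] {u x w z : W} (h : H.Adj u x) (p : H.Walk x w)
    (hz : z ∈ (Walk.cons h p).support) (hzu : z ≠ u) :
    (Walk.cons h p).takeUntil z hz =
      Walk.cons h (p.takeUntil z (by cases hz with
        | head => exact absurd rfl hzu
        | tail _ hh => exact hh)) := by
  rw [Walk.takeUntil]
  rw [dif_neg (fun hh => hzu hh.symm)]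

lemma median_aux [DecidableEq W] (hH : H.IsAcyclic) :
    ∀ (n : ℕ) {a b c : W} (p : H.Walk a b) (q : H.Walk a c), p.length ≤ n →
      p.IsPath → q.IsPath →
      ∃ (m : W) (p₂ : H.Walk m b) (q₂ : H.Walk m c),
        p₂.IsPath ∧ q₂.IsPath ∧
        (∀ z, z ∈ p₂.support → z ∈ q₂.support → z = m) ∧
        m ∈ p.support ∧ m ∈ q.support := by
  intro n
  induction n with
  | zero =>
      intro a b c p q hlen hp hq
      cases p with
      | nil =>
          exact ⟨a, Walk.nil, q, by simp, hq, fun z hz1 _ => by simpa using hz1,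
            by simp, q.start_mem_support⟩
      | cons h p' => simp [Walk.length_cons] at hlen
  | succ n ih =>
      intro a b c p q hlen hp hq
      cases p with
      | nil =>
          exact ⟨a, Walk.nil, q, by simp, hq, fun z hz1 _ => by simpa using hz1,
            by simp, q.start_mem_support⟩
      | @cons _ x _ hax p' =>
          cases q with
          | nil =>
              exact ⟨a, Walk.cons hax p', Walk.nil, hp, by simp,
                fun z _ hz2 => by simpa using hz2, (Walk.cons hax p').start_mem_support, by simp⟩
          | @cons _ y _ hay q' =>
              by_cases hxy : x = y
              · subst hxy
                obtain ⟨m, p₂, q₂, h1, h2, h3, hm1, hm2⟩ :=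
                  ih p' q' (by simpa [Walk.length_cons] using hlen) hp.of_cons hq.of_cons
                exact ⟨m, p₂, q₂, h1, h2, h3,
                  by rw [Walk.support_cons]; exact List.mem_cons_of_mem _ hm1,
                  by rw [Walk.support_cons]; exact List.mem_cons_of_mem _ hm2⟩
              · refine ⟨a, Walk.cons hax p', Walk.cons hay q', hp, hq, ?_,
                  (Walk.cons hax p').start_mem_support, (Walk.cons hay q').start_mem_support⟩
                intro z hz1 hz2
                by_contra hza
                have hP1 : ((Walk.cons hax p').takeUntil z hz1).IsPath := hp.takeUntil hz1
                have hP2 : ((Walk.cons hay q').takeUntil z hz2).IsPath := hq.takeUntil hz2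
                have heq : ((Walk.cons hax p').takeUntil z hz1) =
                    ((Walk.cons hay q').takeUntil z hz2) := by
                  have := hH.path_unique ⟨_, hP1⟩ ⟨_, hP2⟩
                  exact congrArg Subtype.val this
                rw [takeUntil_cons hax p' hz1 hza, takeUntil_cons hay q' hz2 hza] at heq
                have := congrArg (fun w => w.getVert 1) heq
                simp only [Walk.getVert_cons_succ, Walk.getVert_zero] at this
                exact hxy this

end ForestAux3

namespace ForestAux4
open ForestAux ForestAux2 ForestAux3

variable {V : Type*} {G : SimpleGraph V}

lemma reach_erase_to_path {T : Set V} {m a b : V}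
    (hm : m ∈ T) (ha : a ∈ T \ {m}) (hb : b ∈ T \ {m})
    (h : (G.induce (T \ {m})).Reachable ⟨a, ha⟩ ⟨b, hb⟩) :
    ∃ p : (G.induce T).Walk ⟨a, ha.1⟩ ⟨b, hb.1⟩, p.IsPath ∧ (⟨m, hm⟩ : ↥T) ∉ p.support := by
  classical
  obtain ⟨w⟩ := h
  have hsub : T \ {m} ⊆ T := Set.diff_subset
  set w' := w.map (G.induceHomOfLE hsub).toHom with hw'
  refine ⟨w'.bypass, w'.bypass_isPath, fun hmem => ?_⟩
  have hmem' : (⟨m, hm⟩ : ↥T) ∈ w'.support := w'.support_bypass_subset hmem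
  rw [hw', Walk.support_map, List.mem_map] at hmem'
  obtain ⟨z, _, hz2⟩ := hmem'
  have : (z : V) = m := congrArg Subtype.val hz2
  exact z.2.2 this

lemma path_avoid_to_reach {T : Set V} {m a b : V} (hm : m ∈ T) (ha : a ∈ T) (hb : b ∈ T)
    (hma : a ≠ m) (hmb : b ≠ m)
    (p : (G.induce T).Walk ⟨a, ha⟩ ⟨b, hb⟩) (hmp : (⟨m, hm⟩ : ↥T) ∉ p.support) :
    (G.induce (T \ {m})).Reachable ⟨a, ⟨ha, hma⟩⟩ ⟨b, ⟨hb, hmb⟩⟩ := by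
  have hs : ∀ z ∈ p.support, (z : V) ∈ T \ {m} := by
    intro z hz
    refine ⟨z.2, ?_⟩
    intro hzm
    have hzm' : (z : V) = m := hzm
    exact hmp (by rwa [show z = (⟨m, hm⟩ : ↥T) from Subtype.ext hzm'] at hz)
  exact ⟨lowerWalk p hs⟩

lemma median_full {T : Set V} (hT : (G.induce T).IsAcyclic) {a b c : V}
    (ha : a ∈ T) (hb : b ∈ T) (hc : c ∈ T)
    (p : (G.induce T).Walk ⟨a, ha⟩ ⟨b, hb⟩) (hp : p.IsPath)
    (hpc : (⟨c, hc⟩ : ↥T) ∉ p.support)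
    (q : (G.induce T).Walk ⟨a, ha⟩ ⟨c, hc⟩) (hq : q.IsPath)
    (hqb : (⟨b, hb⟩ : ↥T) ∉ q.support)
    (r : (G.induce T).Walk ⟨b, hb⟩ ⟨c, hc⟩) (hr : r.IsPath)
    (hra : (⟨a, ha⟩ : ↥T) ∉ r.support) :
    ∃ m : ↥T, m ≠ ⟨a, ha⟩ ∧ m ≠ ⟨b, hb⟩ ∧ m ≠ ⟨c, hc⟩ ∧
      (∀ w : (G.induce T).Walk ⟨a, ha⟩ ⟨b, hb⟩, w.IsPath → m ∈ w.support) ∧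
      (∀ w : (G.induce T).Walk ⟨a, ha⟩ ⟨c, hc⟩, w.IsPath → m ∈ w.support) ∧
      (∀ w : (G.induce T).Walk ⟨b, hb⟩ ⟨c, hc⟩, w.IsPath → m ∈ w.support) := by
  classical
  obtain ⟨m, p₂, q₂, hp₂, hq₂, hinter, hmp, hmq⟩ :=
    median_aux hT p.length p q le_rfl hp hq
  -- the path from b to c through m
  have hmq₂tail : m ∉ q₂.support.tail := by
    have := hq₂.support_nodup
    rw [q₂.support_eq_cons] at this
    exact (List.nodup_cons.mp this).1
  have hdisj : ∀ z ∈ p₂.reverse.support, z ∉ q₂.support.tail := by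
    intro z hz1 hz2
    rw [Walk.support_reverse, List.mem_reverse] at hz1
    have := hinter z hz1 (List.mem_of_mem_tail hz2)
    subst this
    exact hmq₂tail hz2
  have hr' : (p₂.reverse.append q₂).IsPath := by
    rw [Walk.isPath_def, Walk.support_append]
    refine List.Nodup.append hp₂.reverse.support_nodup ?_ ?_
    · have := hq₂.support_nodup
      rw [q₂.support_eq_cons] at this
      exact (List.nodup_cons.mp this).2
    · intro z hz1 hz2
      exact hdisj z hz1 hz2
  have hmr' : m ∈ (p₂.reverse.append q₂).support := by
    rw [Walk.support_append, List.mem_append]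
    left
    rw [Walk.support_reverse, List.mem_reverse]
    exact p₂.start_mem_support
  have huniq_ab : ∀ w : (G.induce T).Walk ⟨a, ha⟩ ⟨b, hb⟩, w.IsPath → m ∈ w.support := by
    intro w hw
    have : w = p := congrArg Subtype.val (hT.path_unique ⟨w, hw⟩ ⟨p, hp⟩)
    rw [this]; exact hmp
  have huniq_ac : ∀ w : (G.induce T).Walk ⟨a, ha⟩ ⟨c, hc⟩, w.IsPath → m ∈ w.support := by
    intro w hw
    have : w = q := congrArg Subtype.val (hT.path_unique ⟨w, hw⟩ ⟨q, hq⟩)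
    rw [this]; exact hmq
  have huniq_bc : ∀ w : (G.induce T).Walk ⟨b, hb⟩ ⟨c, hc⟩, w.IsPath → m ∈ w.support := by
    intro w hw
    have : w = p₂.reverse.append q₂ := congrArg Subtype.val (hT.path_unique ⟨w, hw⟩ ⟨_, hr'⟩)
    rw [this]; exact hmr'
  refine ⟨m, ?_, ?_, ?_, huniq_ab, huniq_ac, huniq_bc⟩
  · intro hma; apply hra; rw [← hma]; exact huniq_bc r hr
  · intro hmb; apply hqb; rw [← hmb]; exact hmq
  · intro hmc; apply hpc; rw [← hmc]; exact hmp

end ForestAux4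

/-- If `v` is a vertex of degree at most 3 in a finite simple graph `G`, then some
maximum induced forest of `G` contains `v`. -/
theorem exists_max_induced_forest_containing_low_degree_vertex
    {V : Type*} [Fintype V] [DecidableEq V] (G : SimpleGraph V) [DecidableRel G.Adj]
    (v : V) (hdeg : G.degree v ≤ 3) :
    ∃ S : Finset V, v ∈ S ∧ (G.induce (S : Set V)).IsAcyclic ∧
      ∀ T : Finset V, (G.induce (T : Set V)).IsAcyclic → T.card ≤ S.card := by
  classical
  obtain ⟨T, hTs, hTmax⟩ := Finset.exists_max_image
      (Finset.univ.powerset.filter (fun S : Finset V => (G.induce (S : Set V)).IsAcyclic))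
      Finset.card ⟨∅, by
        simp only [Finset.mem_filter, Finset.mem_powerset]
        refine ⟨Finset.empty_subset _, ?_⟩
        intro u c hc
        exact absurd u.2 (by simp)⟩
  have hT : (G.induce (T : Set V)).IsAcyclic := (Finset.mem_filter.mp hTs).2
  have hmax : ∀ T' : Finset V, (G.induce (T' : Set V)).IsAcyclic → T'.card ≤ T.card := by
    intro T' h'
    exact hTmax T' (Finset.mem_filter.mpr ⟨Finset.mem_powerset.mpr (Finset.subset_univ _), h'⟩)
  by_cases hvT : v ∈ T
  · exact ⟨T, hvT, hT, hmax⟩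
  have hvS : v ∉ (T : Set V) := by simpa using hvT
  have hins : ¬ (G.induce (insert v (T : Set V))).IsAcyclic := by
    intro hacy
    have h1 : ((insert v T : Finset V) : Set V) = insert v (T : Set V) := by simp
    have := hmax (insert v T) (by rw [h1]; exact hacy)
    rw [Finset.card_insert_of_notMem hvT] at this
    omega
  obtain ⟨a, b, haT, hbT, hva, hvb, hab, hreach⟩ := ForestAux2.exists_pair _ v hvS hT hins
  have hdone : ∀ u ∈ T, (G.induce (insert v ((T : Set V) \ {u}))).IsAcyclic →
      ∃ S : Finset V, v ∈ S ∧ (G.induce (S : Set V)).IsAcyclic ∧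
        ∀ T' : Finset V, (G.induce (T' : Set V)).IsAcyclic → T'.card ≤ S.card := by
    intro u hu hacy
    have hco : ((insert v (T.erase u) : Finset V) : Set V) = insert v ((T : Set V) \ {u}) := by
      simp
    have hcardeq : (insert v (T.erase u)).card = T.card := by
      rw [Finset.card_insert_of_notMem (fun hmem => hvT (Finset.mem_of_mem_erase hmem)),
        Finset.card_erase_of_mem hu]
      have : 1 ≤ T.card := Finset.card_pos.mpr ⟨u, hu⟩
      omega
    refine ⟨insert v (T.erase u), Finset.mem_insert_self _ _, by rw [hco]; exact hacy, ?_⟩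
    intro T' h'
    rw [hcardeq]
    exact hmax T' h'
  have hfail : ∀ u, ¬ (G.induce (insert v ((T : Set V) \ {u}))).IsAcyclic →
      ∃ (x y : V) (hx : x ∈ (T : Set V) \ {u}) (hy : y ∈ (T : Set V) \ {u}),
        G.Adj v x ∧ G.Adj v y ∧ x ≠ y ∧
        (G.induce ((T : Set V) \ {u})).Reachable ⟨x, hx⟩ ⟨y, hy⟩ := by
    intro u hna
    exact ForestAux2.exists_pair _ v (fun hmem => hvS hmem.1)
      (ForestAux.acyclic_mono Set.diff_subset hT) hna
  set M : Finset V := T.filter (fun w => G.Adj v w) with hM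
  have hMcard : M.card ≤ 3 := by
    refine le_trans (Finset.card_le_card ?_) hdeg
    intro w hw
    rw [SimpleGraph.mem_neighborFinset]
    exact (Finset.mem_filter.mp hw).2
  have hmemM : ∀ w : V, w ∈ (T : Set V) → G.Adj v w → w ∈ M := by
    intro w h1 h2
    exact Finset.mem_filter.mpr ⟨Finset.mem_coe.mp h1, h2⟩
  by_cases htry_a : (G.induce (insert v ((T : Set V) \ {a}))).IsAcyclic
  · exact hdone a (Finset.mem_coe.mp haT) htry_a
  by_cases htry_b : (G.induce (insert v ((T : Set V) \ {b}))).IsAcyclic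
  · exact hdone b (Finset.mem_coe.mp hbT) htry_b
  obtain ⟨x, y, hx, hy, hvx, hvy, hxy, hreach_a⟩ := hfail a htry_a
  have hba : b ∈ (T : Set V) \ {a} := ⟨hbT, by simpa using hab.symm⟩
  have hxa : x ≠ a := fun h => hx.2 (by rw [Set.mem_singleton_iff]; exact h)
  have hya : y ≠ a := fun h => hy.2 (by rw [Set.mem_singleton_iff]; exact h)
  obtain ⟨c, hca', hvc, hcnea, hcneb, hreach_bc⟩ :
      ∃ (c : V) (hc' : c ∈ (T : Set V) \ {a}), G.Adj v c ∧ c ≠ a ∧ c ≠ b ∧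
        (G.induce ((T : Set V) \ {a})).Reachable ⟨b, hba⟩ ⟨c, hc'⟩ := by
    by_cases hxb : x = b
    · subst hxb
      exact ⟨y, hy, hvy, hya, hxy.symm, hreach_a⟩
    by_cases hyb : y = b
    · subst hyb
      exact ⟨x, hx, hvx, hxa, hxy, hreach_a.symm⟩
    exfalso
    have haM : a ∈ M := hmemM a haT hva
    have hbM : b ∈ M := hmemM b hbT hvb
    have hxM : x ∈ M := hmemM x hx.1 hvx
    have hyM : y ∈ M := hmemM y hy.1 hvy
    have hsub4 : ({a, b, x, y} : Finset V) ⊆ M := by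
      simp [Finset.insert_subset_iff, haM, hbM, hxM, hyM]
    have hc4 : ({a, b, x, y} : Finset V).card = 4 := by
      rw [Finset.card_insert_of_notMem (by simp [hab, Ne.symm hxa, Ne.symm hya]),
        Finset.card_insert_of_notMem (by simp [Ne.symm hxb, Ne.symm hyb]),
        Finset.card_insert_of_notMem (by simp [hxy]),
        Finset.card_singleton]
    have := Finset.card_le_card hsub4
    omega
  have hcT : c ∈ (T : Set V) := hca'.1
  have hcM : c ∈ M := hmemM c hcT hvc
  have haM : a ∈ M := hmemM a haT hva
  have hbM : b ∈ M := hmemM b hbT hvb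
  have hMeq : M = {a, b, c} := by
    refine (Finset.eq_of_subset_of_card_le ?_ ?_).symm
    · simp [Finset.insert_subset_iff, haM, hbM, hcM]
    · refine le_trans hMcard (le_of_eq ?_)
      rw [Finset.card_insert_of_notMem (by simp [hab, Ne.symm hcnea]),
        Finset.card_insert_of_notMem (by simp [Ne.symm hcneb]),
        Finset.card_singleton]
  have hMmem : ∀ w : V, w ∈ (T : Set V) → G.Adj v w → w = a ∨ w = b ∨ w = c := by
    intro w h1 h2
    have := hmemM w h1 h2
    rw [hMeq] at this
    simpa using this
  -- failure of removing b gives a path between a and c avoiding b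
  have hab' : a ∈ (T : Set V) \ {b} := ⟨haT, by simpa using hab⟩
  have hcb' : c ∈ (T : Set V) \ {b} := ⟨hcT, by simpa using hcneb⟩
  have hreach_ac : (G.induce ((T : Set V) \ {b})).Reachable ⟨a, hab'⟩ ⟨c, hcb'⟩ := by
    obtain ⟨x2, y2, hx2, hy2, hvx2, hvy2, hxy2, hreach_b⟩ := hfail b htry_b
    have hx2' : x2 = a ∨ x2 = c := by
      rcases hMmem x2 hx2.1 hvx2 with h | h | h
      · exact Or.inl h
      · exact absurd h (fun hh => hx2.2 (by rw [Set.mem_singleton_iff]; exact hh))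
      · exact Or.inr h
    have hy2' : y2 = a ∨ y2 = c := by
      rcases hMmem y2 hy2.1 hvy2 with h | h | h
      · exact Or.inl h
      · exact absurd h (fun hh => hy2.2 (by rw [Set.mem_singleton_iff]; exact hh))
      · exact Or.inr h
    rcases hx2' with rfl | rfl <;> rcases hy2' with rfl | rfl
    · exact absurd rfl hxy2
    · exact hreach_b
    · exact hreach_b.symm
    · exact absurd rfl hxy2
  by_cases htry_c : (G.induce (insert v ((T : Set V) \ {c}))).IsAcyclic
  · exact hdone c (Finset.mem_coe.mp hcT) htry_c
  have hac' : a ∈ (T : Set V) \ {c} := ⟨haT, by simpa using Ne.symm hcnea⟩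
  have hbc' : b ∈ (T : Set V) \ {c} := ⟨hbT, by simpa using Ne.symm hcneb⟩
  have hreach_ab : (G.induce ((T : Set V) \ {c})).Reachable ⟨a, hac'⟩ ⟨b, hbc'⟩ := by
    obtain ⟨x2, y2, hx2, hy2, hvx2, hvy2, hxy2, hreach_c⟩ := hfail c htry_c
    have hx2' : x2 = a ∨ x2 = b := by
      rcases hMmem x2 hx2.1 hvx2 with h | h | h
      · exact Or.inl h
      · exact Or.inr h
      · exact absurd h (fun hh => hx2.2 (by rw [Set.mem_singleton_iff]; exact hh))
    have hy2' : y2 = a ∨ y2 = b := by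
      rcases hMmem y2 hy2.1 hvy2 with h | h | h
      · exact Or.inl h
      · exact Or.inr h
      · exact absurd h (fun hh => hy2.2 (by rw [Set.mem_singleton_iff]; exact hh))
    rcases hx2' with rfl | rfl <;> rcases hy2' with rfl | rfl
    · exact absurd rfl hxy2
    · exact hreach_c
    · exact hreach_c.symm
    · exact absurd rfl hxy2
  -- extract the three paths
  obtain ⟨p, hp, hpc⟩ := ForestAux4.reach_erase_to_path hcT hac' hbc' hreach_ab
  obtain ⟨q, hq, hqb⟩ := ForestAux4.reach_erase_to_path hbT hab' hcb' hreach_ac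
  obtain ⟨r, hr, hra⟩ := ForestAux4.reach_erase_to_path haT hba
    (show c ∈ (T : Set V) \ {a} from hca') hreach_bc
  obtain ⟨m, hma, hmb, hmc, Hab, Hac, Hbc⟩ :=
    ForestAux4.median_full hT haT hbT hcT p hp hpc q hq hqb r hr hra
  refine hdone (m : V) (Finset.mem_coe.mp m.2) ?_
  apply ForestAux2.insert_acyclic
  · exact fun h => hvS h.1
  · exact ForestAux.acyclic_mono Set.diff_subset hT
  · intro x3 y3 hx3 hy3 hvx3 hvy3 hne3 hre3
    obtain ⟨w, hw, hwm⟩ := ForestAux4.reach_erase_to_path m.2 hx3 hy3 hre3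
    have hwm' : m ∉ w.support := hwm
    rcases hMmem x3 hx3.1 hvx3 with rfl | rfl | rfl <;>
      rcases hMmem y3 hy3.1 hvy3 with rfl | rfl | rfl
    · exact hne3 rfl
    · exact hwm' (Hab w hw)
    · exact hwm' (Hac w hw)
    · refine hwm' ?_
      have := Hab w.reverse hw.reverse
      rwa [Walk.support_reverse, List.mem_reverse] at this
    · exact hne3 rfl
    · exact hwm' (Hbc w hw)
    · refine hwm' ?_
      have := Hac w.reverse hw.reverse
      rwa [Walk.support_reverse, List.mem_reverse] at this
    · refine hwm' ?_
      have := Hbc w.reverse hw.reverse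
      rwa [Walk.support_reverse, List.mem_reverse] at this
    · exact hne3 rfl
end
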